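/- arXiv:2109.01973 — 2 statements merged into one kernel-verified Lean document; each statement's English description precedes it below -/
import Mathlib

section
/- If G is a graph on n vertices with minimum degree at least δ, then the largest eigenvalue λ(G) of its adjacency matrix satisfies λ(G) ≤ (1/2)(δ - 1 + sqrt(8·e(G) - 4δn + (δ+1)²)), where e(G) is the number of edges of G. -/
open SimpleGraph

/-- `K_δ ∨ (K_{n-2δ+k} ∪ I_{δ-k})` on `Fin n`: vertices `< d` form the dominating
clique `K_d`, vertices in `[d, n-d+k)` form the clique, the rest are independent. -/
def Hgraph (n k d : ℕ) : SimpleGraph (Fin n) where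
  Adj u v := u ≠ v ∧ ((u : ℕ) < d ∨ (v : ℕ) < d ∨ ((u : ℕ) < n - d + k ∧ (v : ℕ) < n - d + k))
  symm := by constructor; intro u v h; exact ⟨h.1.symm, by tauto⟩
  loopless := by constructor; intro u h; exact h.1 rfl

/-- `K_{k+1} ∨ (K_{n-d-1} ∪ K_{d-k})` on `Fin n`: vertices `< k+1` form the dominating
clique, `[k+1, n-d+k)` forms `K_{n-d-1}`, `[n-d+k, n)` forms `K_{d-k}`. -/
def Lgraph (n k d : ℕ) : SimpleGraph (Fin n) where
  Adj u v := u ≠ v ∧ ((u : ℕ) < k + 1 ∨ (v : ℕ) < k + 1 ∨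
    ((u : ℕ) < n - d + k ∧ (v : ℕ) < n - d + k) ∨
    (n - d + k ≤ (u : ℕ) ∧ n - d + k ≤ (v : ℕ)))
  symm := by constructor; intro u v h; exact ⟨h.1.symm, by tauto⟩
  loopless := by constructor; intro u h; exact h.1 rfl

/-- `K_m ∪ I_{n-m}` on `Fin n`: vertices `< m` form a clique, the rest are isolated. -/
def KIgraph (n m : ℕ) : SimpleGraph (Fin n) where
  Adj u v := u ≠ v ∧ (u : ℕ) < m ∧ (v : ℕ) < m
  symm := by constructor; intro u v h; exact ⟨h.1.symm, h.2.2, h.2.1⟩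
  loopless := by constructor; intro u h; exact h.1 rfl

/-- Degree of a vertex, as the cardinality of its neighbour set. -/
noncomputable def deg {V : Type*} (G : SimpleGraph V) (v : V) : ℕ := (G.neighborSet v).ncard

/-- Number of edges of a graph. -/
noncomputable def eCount {V : Type*} (G : SimpleGraph V) : ℕ := G.edgeSet.ncard

open scoped Classical in
/-- Adjacency matrix over `ℝ`. -/
noncomputable def adjMat {V : Type*} [Fintype V] (G : SimpleGraph V) : Matrix V V ℝ :=
  fun u v => if G.Adj u v then 1 else 0

open scoped Classical in
/-- Signless Laplacian matrix `Q(G) = D(G) + A(G)` over `ℝ`. -/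
noncomputable def sLap {V : Type*} [Fintype V] (G : SimpleGraph V) : Matrix V V ℝ :=
  fun u v => (if u = v then (deg G u : ℝ) else 0) + (if G.Adj u v then 1 else 0)

/-- The largest (real) eigenvalue of a matrix. -/
noncomputable def maxEig {V : Type*} [Fintype V] (A : Matrix V V ℝ) : ℝ :=
  sSup {μ : ℝ | ∃ x : V → ℝ, x ≠ 0 ∧ A.mulVec x = μ • x}

/-- A graph is `k`-Hamiltonian if deleting any set of at most `k` vertices
leaves a Hamiltonian graph. -/
def IsKHamiltonian {n : ℕ} (G : SimpleGraph (Fin n)) (k : ℕ) : Prop :=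
  ∀ S : Finset (Fin n), S.card ≤ k →
    (G.induce ((↑(Sᶜ) : Set (Fin n)))).IsHamiltonian

/-- A graph is `k`-edge-Hamiltonian if every linear forest with at most `k` edges
(a set of edges forming vertex-disjoint paths) is contained in a Hamiltonian cycle. -/
def IsKEdgeHamiltonian {n : ℕ} (G : SimpleGraph (Fin n)) (k : ℕ) : Prop :=
  ∀ F : Set (Sym2 (Fin n)), F ⊆ G.edgeSet → F.ncard ≤ k →
    (SimpleGraph.fromEdgeSet F).IsAcyclic →
    (∀ v, ((SimpleGraph.fromEdgeSet F).neighborSet v).ncard ≤ 2) →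
    ∃ (a : Fin n) (p : G.Walk a a), p.IsHamiltonianCycle ∧ ∀ e ∈ F, e ∈ p.edges

/-- The `s`-closure of a graph: the smallest supergraph in which any two distinct
non-adjacent vertices have degree sum less than `s`. -/
noncomputable def closureGraph {V : Type*} (G : SimpleGraph V) (s : ℕ) : SimpleGraph V :=
  sInf {H | G ≤ H ∧ ∀ u v, u ≠ v → s ≤ deg H u + deg H v → H.Adj u v}


section Aux

open Finset

lemma deg_eq_degree' {V : Type*} [Fintype V] (G : SimpleGraph V) [DecidableRel G.Adj] (v : V) :
    deg G v = G.degree v := by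
  have h : G.neighborSet v = ↑(G.neighborFinset v) := by
    ext u; simp
  rw [deg]; conv_lhs => rw [h]
  rw [Set.ncard_coe_finset]
  rfl

lemma eCount_eq' {V : Type*} [Fintype V] [DecidableEq V] (G : SimpleGraph V)
    [DecidableRel G.Adj] : eCount G = G.edgeFinset.card := by
  have h : G.edgeSet = ↑G.edgeFinset := by
    ext e; simp
  rw [eCount, h, Set.ncard_coe_finset]

end Aux

/-- Hong–Shu–Fang / Nikiforov bound: if `G` has minimum degree at least `δ`, then
`λ(G) ≤ (δ - 1 + sqrt(8 e(G) - 4 δ n + (δ+1)²)) / 2`. -/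
theorem stmt_5 {V : Type*} [Fintype V] (G : SimpleGraph V) (d : ℕ)
    (hδ : ∀ v, d ≤ deg G v) :
    maxEig (adjMat G) ≤
      ((d : ℝ) - 1 +
        Real.sqrt (8 * (eCount G : ℝ) - 4 * d * (Fintype.card V : ℝ) + ((d : ℝ) + 1) ^ 2)) / 2 := by
  classical
  have hsqrtnn : 0 ≤ Real.sqrt (8 * (eCount G : ℝ) - 4 * d * (Fintype.card V : ℝ) + ((d : ℝ) + 1) ^ 2) :=
    Real.sqrt_nonneg _
  have hhand : ∑ v : V, (deg G v : ℝ) = 2 * (eCount G : ℝ) := by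
    have h2 : ∑ v : V, deg G v = 2 * eCount G := by
      rw [eCount_eq' G]
      simpa [deg_eq_degree'] using SimpleGraph.sum_degrees_eq_twice_card_edges G
    exact_mod_cast h2
  have hdn : (d : ℝ) * (Fintype.card V : ℝ) ≤ 2 * (eCount G : ℝ) := by
    calc (d : ℝ) * (Fintype.card V : ℝ) = ∑ _v : V, (d : ℝ) := by
          rw [Finset.sum_const, Finset.card_univ, nsmul_eq_mul, mul_comm]
      _ ≤ ∑ v : V, (deg G v : ℝ) :=
          Finset.sum_le_sum (fun v _ => by exact_mod_cast hδ v)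
      _ = 2 * (eCount G : ℝ) := hhand
  have hRHS0 : 0 ≤ ((d : ℝ) - 1 +
      Real.sqrt (8 * (eCount G : ℝ) - 4 * d * (Fintype.card V : ℝ) + ((d : ℝ) + 1) ^ 2)) / 2 := by
    rcases Nat.eq_zero_or_pos d with h0 | h1
    · subst h0
      have hE : (1 : ℝ) ≤ 8 * (eCount G : ℝ) - 4 * ((0 : ℕ) : ℝ) * (Fintype.card V : ℝ)
          + (((0 : ℕ) : ℝ) + 1) ^ 2 := by
        push_cast
        have hm : (0 : ℝ) ≤ (eCount G : ℝ) := Nat.cast_nonneg _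
        nlinarith
      have h1le := Real.sqrt_le_sqrt hE
      rw [Real.sqrt_one] at h1le
      have key : ∀ q : ℝ, 1 ≤ q → (0 : ℝ) ≤ (((0 : ℕ) : ℝ) - 1 + q) / 2 := by
        intro q hq
        push_cast
        linarith
      exact key _ h1le
    · have : (1 : ℝ) ≤ (d : ℝ) := by exact_mod_cast h1
      linarith
  unfold maxEig
  apply Real.sSup_le _ hRHS0
  rintro μ ⟨x, hx0, hxe⟩
  -- setup
  have hxv : ∃ v, x v ≠ 0 := by
    by_contra h
    push_neg at h
    exact hx0 (funext fun v => h v)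
  obtain ⟨v₀, hv₀⟩ := hxv
  obtain ⟨w, -, hw⟩ := Finset.exists_max_image Finset.univ (fun v => |x v|)
    ⟨v₀, Finset.mem_univ v₀⟩
  set z : V → ℝ := fun v => |x v| with hzdef
  have hM : 0 < z w := lt_of_lt_of_le (abs_pos.mpr hv₀) (hw v₀ (Finset.mem_univ v₀))
  have hznn : ∀ v, 0 ≤ z v := fun v => abs_nonneg _
  have hzle : ∀ v, z v ≤ z w := fun v => hw v (Finset.mem_univ v)
  set ν : ℝ := |μ| with hνdef
  have hν0 : 0 ≤ ν := abs_nonneg μ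
  have hA0 : ∀ v u, 0 ≤ adjMat G v u := by
    intro v u; unfold adjMat; split <;> norm_num
  have hA1 : ∀ v u, adjMat G v u ≤ 1 := by
    intro v u; unfold adjMat; split <;> norm_num
  have hAdiag : ∀ v, adjMat G v v = 0 := by
    intro v; unfold adjMat; rw [if_neg (G.irrefl)]
  have hmul : ∀ v, (adjMat G).mulVec x v = μ * x v := by
    intro v; rw [hxe]; simp
  have hsub : ∀ v, ν * z v ≤ ∑ u, adjMat G v u * z u := by
    intro v
    have h1 : ν * z v = |(adjMat G).mulVec x v| := by
      rw [hmul v, hνdef, hzdef]; rw [abs_mul]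
    rw [h1]
    have h2 : (adjMat G).mulVec x v = ∑ u, adjMat G v u * x u := by
      simp [Matrix.mulVec, dotProduct]
    rw [h2]
    refine le_trans (Finset.abs_sum_le_sum_abs _ _) (le_of_eq ?_)
    refine Finset.sum_congr rfl fun u _ => ?_
    rw [abs_mul, abs_of_nonneg (hA0 v u)]
  have hrow : ∀ u, (∑ v, adjMat G v u) = (deg G u : ℝ) := by
    intro u
    have h1 : ∀ v, adjMat G v u = if G.Adj u v then (1 : ℝ) else 0 := by
      intro v
      unfold adjMat
      by_cases h : G.Adj v u
      · rw [if_pos h, if_pos h.symm]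
      · rw [if_neg h, if_neg (fun hh => h hh.symm)]
    rw [Finset.sum_congr rfl (fun v _ => h1 v), Finset.sum_boole]
    congr 1
    rw [deg_eq_degree']
    rw [show (Finset.filter (fun v => G.Adj u v) Finset.univ) = G.neighborFinset u from
      (SimpleGraph.neighborFinset_eq_filter G).symm]
    rfl
  set S : ℝ := ∑ v, z v with hSdef
  have hSum : ν * S ≤ (2 * (eCount G : ℝ) - d * (Fintype.card V : ℝ)) * z w + d * S := by
    have h1 : ν * S = ∑ v, ν * z v := by rw [hSdef, Finset.mul_sum]
    have h2 : ∑ v, ν * z v ≤ ∑ v, ∑ u, adjMat G v u * z u :=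
      Finset.sum_le_sum fun v _ => hsub v
    have h3 : ∑ v, ∑ u, adjMat G v u * z u = ∑ u, (deg G u : ℝ) * z u := by
      rw [Finset.sum_comm]
      refine Finset.sum_congr rfl fun u _ => ?_
      rw [← Finset.sum_mul, hrow u]
    have h4 : ∑ u, (deg G u : ℝ) * z u ≤ ∑ u, (((deg G u : ℝ) - d) * z w + d * z u) := by
      refine Finset.sum_le_sum fun u _ => ?_
      have hd : (d : ℝ) ≤ (deg G u : ℝ) := by exact_mod_cast hδ u
      nlinarith [hzle u, hznn u]
    have h5 : ∑ u, (((deg G u : ℝ) - d) * z w + d * z u)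
        = (2 * (eCount G : ℝ) - d * (Fintype.card V : ℝ)) * z w + d * S := by
      have hsum1 : ∑ u : V, ((deg G u : ℝ) - d)
          = 2 * (eCount G : ℝ) - d * (Fintype.card V : ℝ) := by
        rw [Finset.sum_sub_distrib, hhand, Finset.sum_const, Finset.card_univ, nsmul_eq_mul]
        ring
      rw [Finset.sum_add_distrib, ← Finset.sum_mul, ← Finset.mul_sum, ← hSdef, hsum1]
    linarith
  have hS1 : (ν + 1) * z w ≤ S := by
    have h1 : ν * z w ≤ ∑ u, adjMat G w u * z u := hsub w
    have h2 : ∑ u, adjMat G w u * z u ≤ S - z w := by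
      have h3 : adjMat G w w * z w + ∑ u ∈ Finset.univ.erase w, adjMat G w u * z u
          = ∑ u, adjMat G w u * z u :=
        Finset.add_sum_erase Finset.univ (fun u => adjMat G w u * z u) (Finset.mem_univ w)
      have h4 : z w + ∑ u ∈ Finset.univ.erase w, z u = S :=
        Finset.add_sum_erase Finset.univ z (Finset.mem_univ w)
      have h5 : ∑ u ∈ Finset.univ.erase w, adjMat G w u * z u
          ≤ ∑ u ∈ Finset.univ.erase w, z u :=
        Finset.sum_le_sum fun u _ => mul_le_of_le_one_left (hznn u) (hA1 w u)
      rw [hAdiag w, zero_mul, zero_add] at h3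
      linarith
    nlinarith
  have hcore : ν ^ 2 - ((d : ℝ) - 1) * ν
      ≤ 2 * (eCount G : ℝ) - d * (Fintype.card V : ℝ) + d := by
    rcases le_or_gt ν (d : ℝ) with hcase | hcase
    · nlinarith
    · have h3 : S * (ν - d) ≤ (2 * (eCount G : ℝ) - d * (Fintype.card V : ℝ)) * z w := by
        nlinarith
      have h4 : ((ν + 1) * (ν - (d : ℝ))) * z w
          ≤ (2 * (eCount G : ℝ) - d * (Fintype.card V : ℝ)) * z w := by
        calc ((ν + 1) * (ν - (d : ℝ))) * z w = ((ν + 1) * z w) * (ν - d) := by ring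
          _ ≤ S * (ν - d) := mul_le_mul_of_nonneg_right hS1 (by linarith)
          _ ≤ _ := h3
      have h5 : (ν + 1) * (ν - (d : ℝ)) ≤ 2 * (eCount G : ℝ) - d * (Fintype.card V : ℝ) :=
        le_of_mul_le_mul_right h4 hM
      nlinarith
  have hμν : μ ≤ ν := le_abs_self μ
  rcases le_or_gt (2 * ν) ((d : ℝ) - 1) with hsm | hlg
  · linarith
  · have h6 : (2 * ν - ((d : ℝ) - 1)) ^ 2
        ≤ 8 * (eCount G : ℝ) - 4 * d * (Fintype.card V : ℝ) + ((d : ℝ) + 1) ^ 2 := by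
      nlinarith
    have h7 : 2 * ν - ((d : ℝ) - 1)
        ≤ Real.sqrt (8 * (eCount G : ℝ) - 4 * d * (Fintype.card V : ℝ) + ((d : ℝ) + 1) ^ 2) := by
      have h8 := Real.sqrt_le_sqrt h6
      rwa [Real.sqrt_sq (by linarith)] at h8
    linarith
end

section
/- Let G be a graph obtained from H_{n,k,δ} = K_δ ∨ (K_{n-2δ+k} ∪ I_{δ-k}) by deleting a set E' of at most ⌊δ(δ-k)/4⌋ edges whose endpoints both lie in the set of vertices of degree n-1 or n-δ+k-1. Then the largest signless Laplacian eigenvalue satisfies q(G) ≥ 2(n - δ + k - 1). -/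
open SimpleGraph

open Matrix

section AuxSpectral
open scoped RealInnerProductSpace

lemma aux_key_repr {n : ℕ} (Q : Matrix (Fin n) (Fin n) ℝ) (hQ : Q.IsHermitian)
    (z : EuclideanSpace ℝ (Fin n)) (i : Fin n) :
    hQ.eigenvectorBasis.repr (WithLp.toLp 2 (Q.mulVec z)) i = hQ.eigenvalues i * hQ.eigenvectorBasis.repr z i := by
  rw [OrthonormalBasis.repr_apply_apply, OrthonormalBasis.repr_apply_apply,
    EuclideanSpace.inner_eq_star_dotProduct, EuclideanSpace.inner_eq_star_dotProduct]
  simp only [star_trivial]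
  rw [dotProduct_comm, dotProduct_comm (WithLp.ofLp z)]
  have hsym : Qᵀ = Q := by
    have := hQ.eq
    rwa [Matrix.conjTranspose_eq_transpose_of_trivial] at this
  calc ⇑(hQ.eigenvectorBasis i) ⬝ᵥ (Q *ᵥ ⇑z)
      = (Qᵀ *ᵥ ⇑(hQ.eigenvectorBasis i)) ⬝ᵥ ⇑z := by
        rw [Matrix.dotProduct_mulVec, Matrix.mulVec_transpose]
    _ = (Q *ᵥ ⇑(hQ.eigenvectorBasis i)) ⬝ᵥ ⇑z := by rw [hsym]
    _ = hQ.eigenvalues i * (⇑(hQ.eigenvectorBasis i) ⬝ᵥ ⇑z) := by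
        rw [hQ.mulVec_eigenvectorBasis, smul_dotProduct]; rfl

lemma aux_rayleigh_le_maxEig {n : ℕ} (Q : Matrix (Fin n) (Fin n) ℝ) (hQ : Q.IsHermitian)
    (x : Fin n → ℝ) (hx : x ≠ 0) (c : ℝ)
    (h : c * (x ⬝ᵥ x) ≤ x ⬝ᵥ Q.mulVec x) : c ≤ maxEig Q := by
  have hn : 0 < n := by
    rcases Nat.eq_zero_or_pos n with h0 | h0
    · exfalso; apply hx; funext i; exact absurd i.2 (by omega)
    · exact h0
  haveI : NeZero n := ⟨hn.ne'⟩
  set B := hQ.eigenvectorBasis with hB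
  set ev := hQ.eigenvalues with hev
  obtain ⟨i₀, -, hmax⟩ := Finset.exists_max_image Finset.univ ev ⟨⟨0, hn⟩, Finset.mem_univ _⟩
  set y : EuclideanSpace ℝ (Fin n) := WithLp.toLp 2 x with hy
  have hy0 : y ≠ 0 := fun h => hx (by simpa [y] using congrArg WithLp.ofLp h)
  have hrepr0 : B.repr y ≠ 0 := fun hc => hy0 (by
    have := congrArg B.repr.symm hc
    simpa using this)
  have hinner : ∀ u v : EuclideanSpace ℝ (Fin n), ⟪u, v⟫ = (⇑u) ⬝ᵥ (⇑v) := by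
    intro u v
    rw [EuclideanSpace.inner_eq_star_dotProduct, dotProduct_comm]
    rfl
  set S := {μ : ℝ | ∃ x : Fin n → ℝ, x ≠ 0 ∧ Q.mulVec x = μ • x} with hS
  have hmem : ev i₀ ∈ S := by
    refine ⟨⇑(B i₀), ?_, hQ.mulVec_eigenvectorBasis i₀⟩
    have := B.orthonormal.ne_zero i₀
    intro hc; apply this; ext j; exact congrFun hc j
  have hub : ∀ μ ∈ S, μ ≤ ev i₀ := by
    rintro μ ⟨z, hz0, hz⟩
    have hz0' : B.repr (WithLp.toLp 2 z) ≠ 0 := fun hc => hz0 (by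
      have := congrArg B.repr.symm hc
      simpa using this)
    obtain ⟨j, hj⟩ : ∃ j, B.repr (WithLp.toLp 2 z) j ≠ 0 := by
      by_contra hc; push_neg at hc; exact hz0' (by ext j; exact hc j)
    have h1 : B.repr (WithLp.toLp 2 (Q.mulVec z)) j = ev j * B.repr (WithLp.toLp 2 z) j := aux_key_repr Q hQ (WithLp.toLp 2 z) j
    have h2 : B.repr (WithLp.toLp 2 (Q.mulVec z)) j = μ * B.repr (WithLp.toLp 2 z) j := by
      rw [hz]
      have : (WithLp.toLp 2 (μ • z : Fin n → ℝ) : EuclideanSpace ℝ (Fin n)) = μ • (WithLp.toLp 2 z : EuclideanSpace ℝ (Fin n)) := rfl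
      rw [this, _root_.map_smul]
      rfl
    have : μ = ev j := by
      have := h1.symm.trans h2
      exact (mul_right_cancel₀ hj this).symm
    rw [this]; exact hmax j (Finset.mem_univ _)
  have hbdd : BddAbove S := ⟨ev i₀, fun μ hμ => hub μ hμ⟩
  have hray : c ≤ ev i₀ := by
    have hxx : (0:ℝ) < x ⬝ᵥ x := by
      have h0 : (0:ℝ) ≤ x ⬝ᵥ x := Finset.sum_nonneg fun i _ => mul_self_nonneg (x i)
      rcases lt_or_eq_of_le h0 with h' | h'
      · exact h'
      · exact absurd ((dotProduct_self_eq_zero).mp h'.symm) hx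
    have hform : x ⬝ᵥ Q.mulVec x ≤ ev i₀ * (x ⬝ᵥ x) := by
      have e1 : x ⬝ᵥ Q.mulVec x = ⟪y, (WithLp.toLp 2 (Q.mulVec x) : EuclideanSpace ℝ (Fin n))⟫ := (hinner y (WithLp.toLp 2 (Q.mulVec x))).symm
      have e2 : x ⬝ᵥ x = ⟪y, y⟫ := (hinner y y).symm
      rw [e1, e2, ← B.repr.inner_map_map y y,
        ← B.repr.inner_map_map y (WithLp.toLp 2 (Q.mulVec x) : EuclideanSpace ℝ (Fin n))]
      rw [PiLp.inner_apply, PiLp.inner_apply]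
      simp only [RCLike.inner_apply, starRingEnd_apply, star_trivial]
      have : ∀ j, B.repr ((WithLp.toLp 2 (Q.mulVec x) : EuclideanSpace ℝ (Fin n))) j = ev j * B.repr y j :=
        fun j => aux_key_repr Q hQ y j
      rw [Finset.mul_sum]
      apply Finset.sum_le_sum
      intro j _
      rw [this j]
      have h1 : ev j * B.repr y j * B.repr y j = ev j * (B.repr y j * B.repr y j) := by ring
      rw [h1]
      apply mul_le_mul_of_nonneg_right (hmax j (Finset.mem_univ _)) (mul_self_nonneg _)
    nlinarith [le_csSup hbdd hmem]
  calc c ≤ ev i₀ := hray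
    _ ≤ maxEig Q := le_csSup hbdd hmem

end AuxSpectral

lemma aux_card_filter_lt (n m : ℕ) (h : m ≤ n) :
    (Finset.univ.filter fun v : Fin n => (v : ℕ) < m).card = m := by
  have : (Finset.univ.filter fun v : Fin n => (v : ℕ) < m)
      = Finset.map (Fin.castLEEmb h) Finset.univ := by
    ext v
    simp only [Finset.mem_filter, Finset.mem_univ, true_and, Finset.mem_map,
      Fin.castLEEmb, Function.Embedding.coeFn_mk]
    constructor
    · intro hv; exact ⟨⟨(v:ℕ), hv⟩, rfl⟩
    · rintro ⟨a, rfl⟩; exact a.2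
  rw [this, Finset.card_map, Finset.card_univ, Fintype.card_fin]

open scoped Classical in
lemma aux_degsum {n : ℕ} (G : SimpleGraph (Fin n)) (u : Fin n) :
    (deg G u : ℝ) = ∑ v : Fin n, (if G.Adj u v then (1:ℝ) else 0) := by
  rw [Finset.sum_boole]
  congr 1
  rw [deg, Set.ncard_eq_toFinset_card']
  congr 1
  ext v
  simp [SimpleGraph.neighborSet]
  exact Set.mem_toFinset

open scoped Classical in
lemma aux_pair_count {n : ℕ} (E' : Finset (Sym2 (Fin n))) (hnd : ∀ e ∈ E', ¬ e.IsDiag) :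
    ∑ u : Fin n, ∑ v : Fin n, (if s(u, v) ∈ E' then (1:ℝ) else 0) = 2 * E'.card := by
  rw [← Finset.sum_product']
  rw [Finset.sum_boole]
  norm_num
  have key : ((Finset.univ ×ˢ Finset.univ).filter fun p : Fin n × Fin n => s(p.1, p.2) ∈ E').card
      = 2 * E'.card := by
    rw [Finset.card_eq_sum_card_fiberwise (f := fun p : Fin n × Fin n => s(p.1, p.2)) (t := E')
      (s := (Finset.univ ×ˢ Finset.univ).filter fun p : Fin n × Fin n => s(p.1, p.2) ∈ E')
      (fun p hp => (Finset.mem_filter.mp hp).2)]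
    have hfib2 : ∀ e ∈ E', (((Finset.univ ×ˢ Finset.univ).filter
          fun p : Fin n × Fin n => s(p.1, p.2) ∈ E').filter
          fun p => s(p.1, p.2) = e).card = 2 := by
      intro e he
      have hfib : (((Finset.univ ×ˢ Finset.univ).filter
            fun p : Fin n × Fin n => s(p.1, p.2) ∈ E').filter
            fun p => s(p.1, p.2) = e) =
          (Finset.univ ×ˢ Finset.univ).filter (fun p : Fin n × Fin n => s(p.1, p.2) = e) := by
        rw [Finset.filter_filter]
        apply Finset.filter_congr
        intro p _
        constructor
        · rintro ⟨-, h2⟩; exact h2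
        · intro h2; exact ⟨h2 ▸ he, h2⟩
      rw [hfib]
      induction e using Sym2.inductionOn with
      | hf a b =>
        have hab : a ≠ b := by
          intro hc; exact hnd _ he (by rw [hc]; exact Sym2.mk_isDiag_iff.mpr rfl)
        have : (Finset.univ ×ˢ Finset.univ).filter
            (fun p : Fin n × Fin n => s(p.1, p.2) = s(a, b)) = {(a, b), (b, a)} := by
          ext p
          obtain ⟨p1, p2⟩ := p
          simp [Sym2.eq_iff, Prod.ext_iff, and_comm]
        rw [this]
        rw [Finset.card_insert_of_notMem (by simp [Prod.ext_iff]; tauto), Finset.card_singleton]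
    rw [Finset.sum_congr rfl hfib2, Finset.sum_const, smul_eq_mul, mul_comm]
  exact_mod_cast key

/-- Deleting at most `⌊δ(δ-k)/4⌋` edges with both endpoints of degree `n-1` or
`n-δ+k-1` from `H_{n,k,δ}` keeps the signless Laplacian spectral radius at least
`2(n-δ+k-1)`. -/
theorem stmt_8 (n k d : ℕ) (hd : k + 2 ≤ d) (hn : 2 * d - k + 1 ≤ n)
    (E' : Finset (Sym2 (Fin n))) (hsub : ↑E' ⊆ (Hgraph n k d).edgeSet)
    (hYZ : ∀ e ∈ E', ∀ v ∈ e, (v : ℕ) < n - d + k)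
    (hcard : E'.card ≤ d * (d - k) / 4) :
    2 * ((n : ℝ) - d + k - 1) ≤ maxEig (sLap ((Hgraph n k d).deleteEdges ↑E')) := by
  classical
  set m := n - d + k with hm
  have hdn : d ≤ n := by omega
  have hmd : d + 1 ≤ m := by omega
  have hmn : m ≤ n := by omega
  have hn0 : 0 < n := by omega
  set G' := (Hgraph n k d).deleteEdges (↑E' : Set (Sym2 (Fin n))) with hG'
  have hadjH : ∀ u v : Fin n, (Hgraph n k d).Adj u v ↔
      (u ≠ v ∧ ((u:ℕ) < d ∨ (v:ℕ) < d ∨ ((u:ℕ) < m ∧ (v:ℕ) < m))) := fun u v => Iff.rfl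
  -- the Q matrix is Hermitian
  have hQ : (sLap G').IsHermitian := by
    ext i j
    simp only [Matrix.conjTranspose_apply, star_trivial, sLap]
    by_cases h : i = j
    · subst h; rfl
    · rw [if_neg (fun hc : j = i => h hc.symm), if_neg h]
      congr 1
      by_cases ha : G'.Adj i j
      · rw [if_pos ha, if_pos ha.symm]
      · rw [if_neg (fun hc => ha hc.symm), if_neg ha]
  -- the test vector
  set x : Fin n → ℝ := fun v => if (v:ℕ) < m then 1 else 0 with hxdef
  set A : Finset (Fin n) := Finset.univ.filter (fun v : Fin n => (v:ℕ) < m) with hAdef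
  have hAcard : A.card = m := aux_card_filter_lt n m hmn
  have hxval1 : ∀ u : Fin n, u ∈ A → x u = 1 := by
    intro u hu
    rw [hAdef, Finset.mem_filter] at hu
    rw [hxdef]; exact if_pos hu.2
  have hxval0 : ∀ u : Fin n, u ∉ A → x u = 0 := by
    intro u hu
    rw [hAdef, Finset.mem_filter] at hu
    push_neg at hu
    have := hu (Finset.mem_univ u)
    rw [hxdef]; exact if_neg (by omega)
  have hx0 : x ≠ 0 := by
    intro hc
    have hmem : (⟨0, hn0⟩ : Fin n) ∈ A := by
      rw [hAdef, Finset.mem_filter]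
      exact ⟨Finset.mem_univ _, by simpa using (by omega : 0 < m)⟩
    have h1 := hxval1 _ hmem
    rw [hc] at h1
    norm_num at h1
  -- splitting the adjacency indicator of G'
  have hsplit : ∀ u v : Fin n, (if G'.Adj u v then (1:ℝ) else 0)
      = (if (Hgraph n k d).Adj u v then (1:ℝ) else 0)
        - (if s(u, v) ∈ E' then (1:ℝ) else 0) := by
    intro u v
    by_cases he : s(u, v) ∈ E'
    · have hadj : (Hgraph n k d).Adj u v := (SimpleGraph.mem_edgeSet _).mp (hsub he)
      have hnadj : ¬ G'.Adj u v := by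
        intro hc
        rw [hG', SimpleGraph.deleteEdges_adj] at hc
        exact hc.2 he
      simp [hnadj, hadj, he]
    · have hiff : G'.Adj u v ↔ (Hgraph n k d).Adj u v := by
        rw [hG', SimpleGraph.deleteEdges_adj]
        exact ⟨And.left, fun h => ⟨h, by simpa using he⟩⟩
      by_cases hadj : (Hgraph n k d).Adj u v <;> simp [he, hiff, hadj]
  -- endpoints of deleted edges lie in A
  have hbbA : ∀ u v : Fin n, s(u, v) ∈ E' → u ∈ A ∧ v ∈ A := by
    intro u v h
    refine ⟨?_, ?_⟩ <;> rw [hAdef, Finset.mem_filter] <;>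
      exact ⟨Finset.mem_univ _, hYZ _ h _ (by simp)⟩
  have hnd : ∀ e ∈ E', ¬ e.IsDiag := by
    intro e he
    exact (Hgraph n k d).not_isDiag_of_mem_edgeSet (hsub he)
  -- sums of the deleted-edge indicator
  have hbbouter : ∀ u : Fin n, u ∉ A → ∑ v : Fin n, (if s(u, v) ∈ E' then (1:ℝ) else 0) = 0 := by
    intro u hu
    apply Finset.sum_eq_zero
    intro v _
    rw [if_neg (fun h => hu (hbbA u v h).1)]
  have hbbinner : ∀ u : Fin n, ∑ v ∈ A, (if s(u, v) ∈ E' then (1:ℝ) else 0)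
      = ∑ v : Fin n, (if s(u, v) ∈ E' then (1:ℝ) else 0) := by
    intro u
    apply Finset.sum_subset (Finset.subset_univ A)
    intro v _ hv
    rw [if_neg (fun h => hv (hbbA u v h).2)]
  have hbbsum1 : ∑ u ∈ A, ∑ v : Fin n, (if s(u, v) ∈ E' then (1:ℝ) else 0)
      = 2 * E'.card := by
    rw [← aux_pair_count E' hnd]
    exact Finset.sum_subset (Finset.subset_univ A) (fun u _ hu => hbbouter u hu)
  have hbbsum2 : ∑ u ∈ A, ∑ v ∈ A, (if s(u, v) ∈ E' then (1:ℝ) else 0) = 2 * E'.card := by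
    rw [← hbbsum1]
    exact Finset.sum_congr rfl (fun u _ => hbbinner u)
  -- row sums of the adjacency indicator of H over all of Fin n
  have haHrow : ∀ u ∈ A, ∑ v : Fin n, (if (Hgraph n k d).Adj u v then (1:ℝ) else 0) =
      if (u:ℕ) < d then ((n-1:ℕ):ℝ) else ((m-1:ℕ):ℝ) := by
    intro u hu
    rw [hAdef, Finset.mem_filter] at hu
    rw [Finset.sum_boole]
    by_cases hud : (u:ℕ) < d
    · rw [if_pos hud]
      have heq : Finset.univ.filter (fun v : Fin n => (Hgraph n k d).Adj u v)
          = Finset.univ.erase u := by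
        ext v
        rw [Finset.mem_filter, Finset.mem_erase, hadjH]
        constructor
        · rintro ⟨-, h1, -⟩; exact ⟨h1.symm, Finset.mem_univ v⟩
        · rintro ⟨h1, -⟩; exact ⟨Finset.mem_univ v, h1.symm, Or.inl hud⟩
      rw [heq, Finset.card_erase_of_mem (Finset.mem_univ u), Finset.card_univ,
        Fintype.card_fin]
    · rw [if_neg hud]
      have heq : Finset.univ.filter (fun v : Fin n => (Hgraph n k d).Adj u v) = A.erase u := by
        ext v
        rw [Finset.mem_filter, Finset.mem_erase, hAdef, Finset.mem_filter, hadjH]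
        constructor
        · rintro ⟨-, h1, h2⟩
          exact ⟨fun hc => h1 hc.symm, Finset.mem_univ v, by omega⟩
        · rintro ⟨h1, -, h2⟩
          exact ⟨Finset.mem_univ v, fun hc => h1 hc.symm, Or.inr (Or.inr ⟨hu.2, h2⟩)⟩
      rw [heq, Finset.card_erase_of_mem, hAcard]
      rw [hAdef, Finset.mem_filter]
      exact ⟨Finset.mem_univ u, hu.2⟩
  have haHsum1 : ∑ u ∈ A, ∑ v : Fin n, (if (Hgraph n k d).Adj u v then (1:ℝ) else 0)
      = (d:ℝ) * ((n-1:ℕ):ℝ) + ((m-d:ℕ):ℝ) * ((m-1:ℕ):ℝ) := by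
    rw [Finset.sum_congr rfl haHrow, Finset.sum_ite, Finset.sum_const, Finset.sum_const,
      nsmul_eq_mul, nsmul_eq_mul]
    have hcd : (A.filter (fun u : Fin n => (u:ℕ) < d)).card = d := by
      rw [hAdef, Finset.filter_filter]
      have heqp : Finset.filter (fun v : Fin n => (v:ℕ) < m ∧ (v:ℕ) < d) Finset.univ
          = Finset.filter (fun v : Fin n => (v:ℕ) < d) Finset.univ := by
        apply Finset.filter_congr
        intro v _
        exact ⟨And.right, fun h => ⟨by omega, h⟩⟩
      rw [heqp]
      exact aux_card_filter_lt n d hdn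
    have hcnd : (A.filter (fun u : Fin n => ¬ (u:ℕ) < d)).card = m - d := by
      have htot := Finset.card_filter_add_card_filter_not
        (s := A) (p := fun u : Fin n => (u:ℕ) < d)
      omega
    rw [hcd, hcnd]
  -- row sums of the adjacency indicator of H over A
  have haHrow2 : ∀ u ∈ A, ∑ v ∈ A, (if (Hgraph n k d).Adj u v then (1:ℝ) else 0)
      = ((m-1:ℕ):ℝ) := by
    intro u hu
    have hu' := hu
    rw [hAdef, Finset.mem_filter] at hu'
    rw [Finset.sum_boole]
    have heq : A.filter (fun v : Fin n => (Hgraph n k d).Adj u v) = A.erase u := by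
      ext v
      rw [Finset.mem_filter, Finset.mem_erase, hAdef, Finset.mem_filter, hadjH]
      constructor
      · rintro ⟨⟨-, h0⟩, h1, -⟩
        exact ⟨fun hc => h1 hc.symm, Finset.mem_univ v, h0⟩
      · rintro ⟨h1, -, h2⟩
        exact ⟨⟨Finset.mem_univ v, h2⟩, fun hc => h1 hc.symm, Or.inr (Or.inr ⟨hu'.2, h2⟩)⟩
    rw [heq, Finset.card_erase_of_mem hu, hAcard]
  have haHsum2 : ∑ u ∈ A, ∑ v ∈ A, (if (Hgraph n k d).Adj u v then (1:ℝ) else 0)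
      = (m:ℝ) * ((m-1:ℕ):ℝ) := by
    rw [Finset.sum_congr rfl haHrow2, Finset.sum_const, nsmul_eq_mul, hAcard]
  -- the degree piece
  have hpiece1 : ∑ u ∈ A, (deg G' u : ℝ)
      = (d:ℝ) * ((n-1:ℕ):ℝ) + ((m-d:ℕ):ℝ) * ((m-1:ℕ):ℝ) - 2 * E'.card := by
    have hstep : ∀ u ∈ A, (deg G' u : ℝ)
        = (∑ v : Fin n, (if (Hgraph n k d).Adj u v then (1:ℝ) else 0))
          - ∑ v : Fin n, (if s(u, v) ∈ E' then (1:ℝ) else 0) := by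
      intro u _
      rw [aux_degsum G' u, ← Finset.sum_sub_distrib]
      exact Finset.sum_congr rfl (fun v _ => by convert hsplit u v)
    rw [Finset.sum_congr rfl hstep, Finset.sum_sub_distrib, haHsum1, hbbsum1]
  -- the adjacency piece over A × A
  have hpiece2 : ∑ u ∈ A, ∑ v ∈ A, (if G'.Adj u v then (1:ℝ) else 0)
      = (m:ℝ) * ((m-1:ℕ):ℝ) - 2 * E'.card := by
    have hstep : ∀ u ∈ A, ∑ v ∈ A, (if G'.Adj u v then (1:ℝ) else 0)
        = (∑ v ∈ A, (if (Hgraph n k d).Adj u v then (1:ℝ) else 0))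
          - ∑ v ∈ A, (if s(u, v) ∈ E' then (1:ℝ) else 0) := by
      intro u _
      rw [← Finset.sum_sub_distrib]
      exact Finset.sum_congr rfl (fun v _ => hsplit u v)
    rw [Finset.sum_congr rfl hstep, Finset.sum_sub_distrib, haHsum2, hbbsum2]
  -- the quadratic form
  have hform : x ⬝ᵥ (sLap G').mulVec x
      = ((∑ u ∈ A, (deg G' u : ℝ)) + ∑ u ∈ A, ∑ v ∈ A, (if G'.Adj u v then (1:ℝ) else 0)) := by
    have hdiag : ∀ u : Fin n,
        ∑ v : Fin n, x u * (if u = v then (deg G' u : ℝ) else 0) * x v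
          = if u ∈ A then (deg G' u : ℝ) else 0 := by
      intro u
      have hterm : ∀ v : Fin n, x u * (if u = v then (deg G' u : ℝ) else 0) * x v
          = if u = v then x u * (deg G' u : ℝ) * x v else 0 := by
        intro v; by_cases h : u = v <;> simp [h]
      rw [Finset.sum_congr rfl (fun v _ => hterm v), Finset.sum_ite_eq,
        if_pos (Finset.mem_univ u)]
      by_cases h : u ∈ A
      · rw [if_pos h, hxval1 u h]; ring
      · rw [if_neg h, hxval0 u h]; ring
    have hoff : ∀ u : Fin n,
        ∑ v : Fin n, x u * (if G'.Adj u v then (1:ℝ) else 0) * x v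
          = if u ∈ A then ∑ v ∈ A, (if G'.Adj u v then (1:ℝ) else 0) else 0 := by
      intro u
      by_cases h : u ∈ A
      · rw [if_pos h]
        have hterm : ∀ v : Fin n, x u * (if G'.Adj u v then (1:ℝ) else 0) * x v
            = if v ∈ A then (if G'.Adj u v then (1:ℝ) else 0) else 0 := by
          intro v
          by_cases hv : v ∈ A
          · rw [if_pos hv, hxval1 u h, hxval1 v hv]; ring
          · rw [if_neg hv, hxval0 v hv]; ring
        rw [Finset.sum_congr rfl (fun v _ => hterm v), Finset.sum_ite_mem,
          Finset.univ_inter]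
      · rw [if_neg h]
        apply Finset.sum_eq_zero
        intro v _
        rw [hxval0 u h]; ring
    calc x ⬝ᵥ (sLap G').mulVec x
        = ∑ u : Fin n, (∑ v : Fin n, x u * (if u = v then (deg G' u : ℝ) else 0) * x v
            + ∑ v : Fin n, x u * (if G'.Adj u v then (1:ℝ) else 0) * x v) := by
          simp only [dotProduct, Matrix.mulVec, sLap]
          apply Finset.sum_congr rfl
          intro u _
          rw [Finset.mul_sum, ← Finset.sum_add_distrib]
          apply Finset.sum_congr rfl
          intro v _
          ring
      _ = (∑ u : Fin n, (if u ∈ A then (deg G' u : ℝ) else 0))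
          + ∑ u : Fin n, (if u ∈ A then ∑ v ∈ A, (if G'.Adj u v then (1:ℝ) else 0) else 0) := by
          rw [Finset.sum_add_distrib]
          congr 1
          · exact Finset.sum_congr rfl (fun u _ => hdiag u)
          · exact Finset.sum_congr rfl (fun u _ => hoff u)
      _ = ((∑ u ∈ A, (deg G' u : ℝ))
          + ∑ u ∈ A, ∑ v ∈ A, (if G'.Adj u v then (1:ℝ) else 0)) := by
          rw [Finset.sum_ite_mem, Finset.univ_inter, Finset.sum_ite_mem, Finset.univ_inter]
  -- the dot product of x with itself
  have hxx : x ⬝ᵥ x = (m:ℝ) := by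
    simp only [dotProduct]
    have hterm : ∀ v : Fin n, x v * x v = if v ∈ A then (1:ℝ) else 0 := by
      intro v
      by_cases h : v ∈ A
      · rw [if_pos h, hxval1 v h]; ring
      · rw [if_neg h, hxval0 v h]; ring
    rw [Finset.sum_congr rfl (fun v _ => hterm v), Finset.sum_ite_mem, Finset.univ_inter,
      Finset.sum_const, hAcard, nsmul_eq_mul, mul_one]
  -- final arithmetic
  apply aux_rayleigh_le_maxEig _ hQ x hx0
  rw [hxx, hform, hpiece1, hpiece2]
  have hE4 : 4 * E'.card ≤ d * (d - k) := by omega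
  have hEr : 4 * (E'.card : ℝ) ≤ (d:ℝ) * ((d:ℝ) - (k:ℝ)) := by
    have := (Nat.cast_le (α := ℝ)).mpr hE4
    push_cast [Nat.cast_sub (by omega : k ≤ d)] at this
    linarith
  have hmr : (m:ℝ) = (n:ℝ) - (d:ℝ) + (k:ℝ) := by
    rw [hm]
    push_cast [Nat.cast_sub hdn]
    ring
  have c1 : ((n-1:ℕ):ℝ) = (n:ℝ) - 1 := by
    push_cast [Nat.cast_sub (by omega : 1 ≤ n)]; ring
  have c2 : ((m-1:ℕ):ℝ) = (m:ℝ) - 1 := by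
    push_cast [Nat.cast_sub (by omega : 1 ≤ m)]; ring
  have c3 : ((m-d:ℕ):ℝ) = (m:ℝ) - (d:ℝ) := by
    push_cast [Nat.cast_sub (by omega : d ≤ m)]; ring
  rw [c1, c2, c3]
  have hdm : (d:ℝ) * ((n:ℝ) - (m:ℝ)) = (d:ℝ) * ((d:ℝ) - (k:ℝ)) := by
    rw [hmr]; ring
  nlinarith [hdm, hEr, hmr]
end
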